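/- Let p be a prime and ψ : ℚ_p → ℂ^× a nontrivial continuous additive character whose kernel is exactly ℤ_p, and let d^×z be the Haar measure on ℚ_p^× normalized so that ℤ_p^× has measure 1. Let n ≥ 1 be an integer and let Ψ : ℚ_p^× → ℂ be a function invariant under multiplication by 1 + p^n ℤ_p (i.e. Ψ(u x) = Ψ(x) for all u ∈ 1 + p^n ℤ_p and x ∈ ℚ_p^×; such a Ψ is locally constant). Then for every a ∈ ℤ_p^× and every y ∈ ℚ_p^×, one has ∫_{a + p^n ℤ_p} Ψ(p^{−n} y z) ψ(p^{−n} y (a − z)) d^×z = (1 − p^{−1})^{−1} p^{−n} Ψ(p^{−n} y a) · 1_{ℤ_p}(y). -/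

import Mathlib

open MeasureTheory ENNReal

private lemma psi_nat_mul {p : ℕ} [Fact p.Prime] (ψ : ℚ_[p] → ℂ)
    (hψ_add : ∀ x y : ℚ_[p], ψ (x + y) = ψ x * ψ y)
    (hψ0 : ψ 0 = 1) (j : ℕ) (x : ℚ_[p]) : ψ ((j : ℚ_[p]) * x) = ψ x ^ j := by
  induction j with
  | zero => simpa using hψ0
  | succ m ih =>
    have h : ((m + 1 : ℕ) : ℚ_[p]) * x = (m : ℚ_[p]) * x + x := by push_cast; ring
    rw [h, hψ_add, ih, pow_succ]

private lemma unit_norm_add {p : ℕ} [Fact p.Prime] {t z : ℚ_[p]} (ht : ‖t‖ = 1)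
    (h : ‖z - t‖ < 1) : ‖z‖ = 1 := by
  have h1 : ‖z‖ ≤ 1 := by
    have := Padic.nonarchimedean (z - t) t
    simpa [ht, h.le] using this.trans (max_le h.le ht.le)
  have h2 : (1:ℝ) ≤ ‖z‖ := by
    have hb := Padic.nonarchimedean (t - z) z
    simp only [sub_add_cancel] at hb
    rw [ht] at hb
    rcases le_max_iff.1 hb with hc | hc
    · rw [norm_sub_rev] at hc; linarith
    · exact hc
  linarith

/-- **Key computation at the end of Section 4.4.** Let `Ψ : ℚ_p^× → ℂ` be invariant
under multiplication by `1 + pⁿℤ_p` (`n ≥ 1`).  Then for every `a ∈ ℤ_p^×` and every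
`y ∈ ℚ_p^×`,
`∫_{a + pⁿℤ_p} Ψ(p⁻ⁿyz) ψ(p⁻ⁿy(a - z)) d^×z = (1 - p⁻¹)⁻¹ p⁻ⁿ Ψ(p⁻ⁿya) · 1_{ℤ_p}(y)`.
Here `ψ` is a nontrivial additive character of `ℚ_p` with kernel exactly `ℤ_p` and
`ν` is the Haar measure of `ℚ_p^×` with `ν(ℤ_p^×) = 1`. -/
theorem key_local_computation
    (p : ℕ) [Fact p.Prime] [MeasurableSpace ℚ_[p]] [BorelSpace ℚ_[p]]
    -- Haar measure on ℚ_p^× with vol(ℤ_p^×) = 1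
    (ν : Measure ℚ_[p]) [ν.Regular]
    (hν_inv : ∀ a : ℚ_[p], a ≠ 0 → Measure.map (fun x => a * x) ν = ν)
    (hν_zero : ν {0} = 0)
    (hν_one : ν {x : ℚ_[p] | ‖x‖ = 1} = 1)
    -- additive character with kernel ℤ_p
    (ψ : ℚ_[p] → ℂ) (hψ_cont : Continuous ψ)
    (hψ_add : ∀ x y : ℚ_[p], ψ (x + y) = ψ x * ψ y)
    (hψ_ker : ∀ x : ℚ_[p], ψ x = 1 ↔ ‖x‖ ≤ 1)
    -- a function invariant under multiplication by 1 + pⁿℤ_p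
    (n : ℕ) (hn : 1 ≤ n) (Ψ : ℚ_[p] → ℂ)
    (hΨ_inv : ∀ u x : ℚ_[p], ‖u - 1‖ ≤ (p : ℝ) ^ (-(n : ℤ)) → Ψ (u * x) = Ψ x) :
    ∀ a : ℚ_[p], ‖a‖ = 1 → ∀ y : ℚ_[p], y ≠ 0 →
      ∫ z in {z : ℚ_[p] | ‖z - a‖ ≤ (p : ℝ) ^ (-(n : ℤ))},
          Ψ (((p : ℚ_[p]) ^ n)⁻¹ * y * z) * ψ (((p : ℚ_[p]) ^ n)⁻¹ * y * (a - z)) ∂ν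
        = (1 - (p : ℂ)⁻¹)⁻¹ * (p : ℂ) ^ (-(n : ℤ)) *
            Ψ (((p : ℚ_[p]) ^ n)⁻¹ * y * a) *
            (if ‖y‖ ≤ 1 then 1 else 0) := by
  intro a ha y hy
  have hppr : p.Prime := Fact.out
  have hp1 : (1:ℝ) < (p:ℝ) := by exact_mod_cast hppr.one_lt
  have hp0R : (0:ℝ) < (p:ℝ) := by linarith
  have hp0 : (p : ℚ_[p]) ≠ 0 := by
    exact_mod_cast (Nat.cast_ne_zero (R := ℚ_[p])).2 hppr.ne_zero
  have hpn0 : ((p : ℚ_[p]) ^ n) ≠ 0 := pow_ne_zero _ hp0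
  have ha0 : a ≠ 0 := by
    intro h; rw [h] at ha; simp at ha
  set c : ℚ_[p] := ((p : ℚ_[p]) ^ n)⁻¹ * y with hc
  -- balls
  set B : ℚ_[p] → ℕ → Set ℚ_[p] := fun t m => {z : ℚ_[p] | ‖z - t‖ ≤ (p : ℝ) ^ (-(m : ℤ))}
    with hBdef
  have hrval : ∀ m : ℕ, (p:ℝ) ^ (-(m:ℤ)) = ((p:ℝ) ^ m)⁻¹ := by
    intro m; rw [zpow_neg, zpow_natCast]
  have hrpos : ∀ m : ℕ, (0:ℝ) < (p:ℝ) ^ (-(m:ℤ)) := fun m => zpow_pos hp0R _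
  have hrlt1 : ∀ m : ℕ, 1 ≤ m → (p:ℝ) ^ (-(m:ℤ)) < 1 := by
    intro m hm
    rw [hrval]
    rw [inv_lt_one_iff₀]
    right
    exact one_lt_pow₀ hp1 (by omega)
  have hmeas : ∀ (t : ℚ_[p]) (m : ℕ), MeasurableSet (B t m) := by
    intro t m
    have : B t m = Metric.closedBall t ((p:ℝ) ^ (-(m:ℤ))) := by
      ext z; simp [hBdef, Metric.mem_closedBall, dist_eq_norm]
    rw [this]; exact measurableSet_closedBall
  -- multiplicative translation invariance of ball measures
  have hνtrans : ∀ (t : ℚ_[p]), ‖t‖ = 1 → ∀ m : ℕ, ν (B t m) = ν (B 1 m) := by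
    intro t ht m
    have ht0 : t ≠ 0 := by intro h; rw [h] at ht; simp at ht
    have hmap := hν_inv t ht0
    have : ν (B t m) = ν ((fun x => t * x) ⁻¹' (B t m)) := by
      conv_lhs => rw [← hmap]
      exact Measure.map_apply (measurable_const_mul t) (hmeas t m)
    rw [this]
    congr 1
    ext x
    simp only [Set.mem_preimage, hBdef, Set.mem_setOf_eq]
    rw [show t * x - t = t * (x - 1) by ring, norm_mul, ht, one_mul]
  -- balls around units sit inside the unit sphere
  have hsub : ∀ (t : ℚ_[p]) (m : ℕ), ‖t‖ = 1 → 1 ≤ m → B t m ⊆ {x : ℚ_[p] | ‖x‖ = 1} := by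
    intro t m ht hm z hz
    exact unit_norm_add ht (lt_of_le_of_lt hz (hrlt1 m hm))
  have hfin : ∀ (t : ℚ_[p]) (m : ℕ), ‖t‖ = 1 → 1 ≤ m → ν (B t m) < ⊤ := by
    intro t m ht hm
    calc ν (B t m) ≤ ν {x : ℚ_[p] | ‖x‖ = 1} := measure_mono (hsub t m ht hm)
    _ = 1 := hν_one
    _ < ⊤ := ENNReal.one_lt_top
  -- Ψ is constant on B a n
  have hΨconst : ∀ z ∈ B a n, Ψ (c * z) = Ψ (c * a) := by
    intro z hz
    have hu : ‖z * a⁻¹ - 1‖ ≤ (p:ℝ) ^ (-(n:ℤ)) := by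
      have : z * a⁻¹ - 1 = (z - a) * a⁻¹ := by field_simp
      rw [this, norm_mul, norm_inv, ha, inv_one, mul_one]
      exact hz
    have h1 := hΨ_inv (z * a⁻¹) (c * a) hu
    rw [show z * a⁻¹ * (c * a) = c * z * (a⁻¹ * a) by ring, inv_mul_cancel₀ ha0, mul_one] at h1
    exact h1
  have hψ0 : ψ 0 = 1 := (hψ_ker 0).2 (by simp)
  -- the measure of B 1 n
  set F : Finset ℕ := (Finset.range (p^n)).filter (fun j => ¬ p ∣ j) with hF
  have hunitj : ∀ j ∈ F, ‖(j : ℚ_[p])‖ = 1 := by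
    intro j hj
    simp only [hF, Finset.mem_filter, Finset.mem_range] at hj
    have h1 : ‖((j:ℤ) : ℚ_[p])‖ ≤ 1 := Padic.norm_int_le_one _
    have h2 : ¬ ‖((j:ℤ) : ℚ_[p])‖ < 1 := by
      rw [Padic.norm_intCast_lt_one_iff]
      exact_mod_cast hj.2
    push_cast at h1 h2 ⊢
    rcases lt_or_eq_of_le h1 with h | h
    · exact absurd h h2
    · exact h
  have hcover : {x : ℚ_[p] | ‖x‖ = 1} = ⋃ j ∈ F, B (j : ℚ_[p]) n := by
    apply Set.Subset.antisymm
    · intro x hx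
      have hx1 : ‖x‖ ≤ 1 := le_of_eq hx
      set zz : ℤ_[p] := ⟨x, hx1⟩ with hzz
      set j : ℕ := zz.appr n with hj
      have hjlt : j < p^n := zz.appr_lt n
      have hnear : ‖x - (j : ℚ_[p])‖ ≤ (p:ℝ) ^ (-(n:ℤ)) := by
        have h0 := ((zz - (j:ℤ_[p])).norm_le_pow_iff_mem_span_pow n).2 (zz.appr_spec n)
        have hco : ((zz - (j:ℤ_[p]) : ℤ_[p]) : ℚ_[p]) = x - (j : ℚ_[p]) := by
          push_cast; rfl
        rw [← hco, PadicInt.padic_norm_e_of_padicInt]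
        exact h0
      have hjdvd : ¬ p ∣ j := by
        intro hdvd
        have hjn : ‖((j:ℤ) : ℚ_[p])‖ < 1 := by
          rw [Padic.norm_intCast_lt_one_iff]; exact_mod_cast hdvd
        push_cast at hjn
        have : ‖x‖ < 1 := by
          have := Padic.nonarchimedean (x - (j:ℚ_[p])) (j:ℚ_[p])
          simp only [sub_add_cancel] at this
          exact lt_of_le_of_lt this (max_lt (lt_of_le_of_lt hnear (hrlt1 n hn)) hjn)
        rw [hx] at this; linarith
      refine Set.mem_biUnion ?_ hnear
      rw [hF]
      exact Finset.mem_filter.2 ⟨Finset.mem_range.2 hjlt, hjdvd⟩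
    · intro x hx
      rcases Set.mem_iUnion₂.1 hx with ⟨j, hj, hxj⟩
      exact hsub _ n (hunitj j hj) hn hxj
  have hdisjF : (↑F : Set ℕ).PairwiseDisjoint (fun j => B (j : ℚ_[p]) n) := by
    intro j hj j' hj' hne
    simp only [Finset.coe_filter, Set.mem_setOf_eq, Finset.mem_range, hF] at hj hj'
    rw [Function.onFun, Set.disjoint_left]
    intro z hz hz'
    have hd : ‖(Int.cast ((j:ℤ) - (j':ℤ)) : ℚ_[p])‖ ≤ (p:ℝ) ^ (-(n:ℤ)) := by
      have := Padic.nonarchimedean ((j:ℚ_[p]) - z) (z - (j':ℚ_[p]))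
      push_cast
      rw [show (j:ℚ_[p]) - (j':ℚ_[p]) = ((j:ℚ_[p]) - z) + (z - (j':ℚ_[p])) by ring]
      refine this.trans (max_le ?_ hz')
      rw [norm_sub_rev]; exact hz
    rw [Padic.norm_int_le_pow_iff_dvd] at hd
    have hne' : (j:ℤ) - (j':ℤ) ≠ 0 := by
      intro h; apply hne; omega
    have := Int.le_of_dvd (abs_pos.2 hne') ((dvd_abs _ _).2 hd)
    have hb1 : (j:ℤ) < (p:ℤ)^n := by exact_mod_cast hj.1
    have hb2 : (j':ℤ) < (p:ℤ)^n := by exact_mod_cast hj'.1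
    have habs : |(j:ℤ) - (j':ℤ)| < (p:ℤ)^n := by
      rw [abs_sub_lt_iff]
      constructor <;> [skip; skip] <;> omega
    linarith
  have hcardF : F.card = p^(n-1) * (p - 1) := by
    have h1 : F = (Finset.range (p^n)).filter ((p^n).Coprime) := by
      apply Finset.filter_congr
      intro j hj
      rw [Nat.coprime_pow_left_iff (show 0 < n by omega), hppr.coprime_iff_not_dvd]
    rw [h1, ← Nat.totient_eq_card_coprime, Nat.totient_prime_pow hppr (by omega)]
  have hcard0 : F.card ≠ 0 := by
    rw [hcardF]
    have h2 := hppr.two_le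
    exact Nat.mul_ne_zero (pow_ne_zero _ (by omega)) (by omega)
  have hνB1 : ν (B 1 n) = ((F.card : ℝ≥0∞))⁻¹ := by
    have h1 : (1 : ℝ≥0∞) = ∑ j ∈ F, ν (B (j : ℚ_[p]) n) := by
      rw [← hν_one, hcover, measure_biUnion_finset hdisjF (fun j _ => hmeas _ _)]
    have h2 : ∀ j ∈ F, ν (B (j : ℚ_[p]) n) = ν (B 1 n) := fun j hj =>
      hνtrans _ (hunitj j hj) n
    rw [Finset.sum_congr rfl h2, Finset.sum_const, nsmul_eq_mul] at h1
    have hcard_ne : (F.card : ℝ≥0∞) ≠ 0 := by exact_mod_cast hcard0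
    have hcard_top : (F.card : ℝ≥0∞) ≠ ⊤ := ENNReal.natCast_ne_top _
    calc ν (B 1 n) = (F.card : ℝ≥0∞)⁻¹ * ((F.card : ℝ≥0∞) * ν (B 1 n)) := by
          rw [← mul_assoc, ENNReal.inv_mul_cancel hcard_ne hcard_top, one_mul]
    _ = (F.card : ℝ≥0∞)⁻¹ := by rw [← h1, mul_one]
  -- norm of c
  have hcnorm : ‖c‖ = (p:ℝ) ^ (n:ℤ) * ‖y‖ := by
    rw [hc, norm_mul, norm_inv, Padic.norm_p_pow]
    congr 1
    rw [← zpow_neg, neg_neg]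
  -- the scalar constant
  have hscalar : ((F.card : ℕ) : ℂ)⁻¹ = (1 - (p:ℂ)⁻¹)⁻¹ * (p:ℂ) ^ (-(n:ℤ)) := by
    have hpC : (p:ℂ) ≠ 0 := by exact_mod_cast hppr.ne_zero
    have hp1C : (p:ℂ) - 1 ≠ 0 := by
      intro h
      have h1 : (p:ℂ) = 1 := by linear_combination h
      have h2 : p = 1 := by exact_mod_cast h1
      have h3 := hppr.two_le
      omega
    have hzp : (p:ℂ) ^ (-(n:ℤ)) = ((p:ℂ)^n)⁻¹ := by rw [zpow_neg, zpow_natCast]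
    have hcast : ((F.card : ℕ) : ℂ) = (p:ℂ)^(n-1) * ((p:ℂ) - 1) := by
      rw [hcardF]
      push_cast [Nat.cast_sub hppr.one_lt.le]
      ring
    have hnn : n - 1 + 1 = n := by omega
    have hpow : (p:ℂ)^n = (p:ℂ)^(n-1) * (p:ℂ) := by
      conv_lhs => rw [← hnn]
      rw [pow_succ]
    rw [hzp, hcast, hpow]
    field_simp
  by_cases hy1 : ‖y‖ ≤ 1
  · -- trivial character case
    have hψone : ∀ z ∈ B a n, ψ (c * (a - z)) = 1 := by
      intro z hz
      apply (hψ_ker _).2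
      rw [norm_mul, hcnorm, norm_sub_rev]
      calc (p:ℝ)^(n:ℤ) * ‖y‖ * ‖z - a‖ ≤ (p:ℝ)^(n:ℤ) * ‖y‖ * ((p:ℝ)^(-(n:ℤ))) := by
            apply mul_le_mul_of_nonneg_left hz
            positivity
      _ = ‖y‖ * ((p:ℝ)^(n:ℤ) * (p:ℝ)^(-(n:ℤ))) := by ring
      _ = ‖y‖ := by rw [← zpow_add₀ (ne_of_gt hp0R), add_neg_cancel, zpow_zero, mul_one]
      _ ≤ 1 := hy1
    have heq : Set.EqOn (fun z => Ψ (c * z) * ψ (c * (a - z)))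
        (fun _ => Ψ (c * a)) (B a n) := by
      intro z hz
      simp only
      rw [hΨconst z hz, hψone z hz, mul_one]
    rw [show {z : ℚ_[p] | ‖z - a‖ ≤ (p:ℝ)^(-(n:ℤ))} = B a n from rfl]
    rw [setIntegral_congr_fun (hmeas a n) heq, setIntegral_const, measureReal_def]
    rw [hνtrans a ha n, hνB1, if_pos hy1, mul_one]
    rw [ENNReal.toReal_inv, ENNReal.toReal_natCast, Complex.real_smul]
    push_cast
    rw [hscalar]
  · -- cancellation case
    push_neg at hy1
    -- extract k ≥ 1 with ‖y‖ = p^k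
    have hval := Padic.norm_eq_zpow_neg_valuation hy
    have hvneg : 0 < -y.valuation := by
      by_contra hcon
      push_neg at hcon
      have : (p:ℝ) ^ (-y.valuation) ≤ (p:ℝ) ^ (0:ℤ) := zpow_le_zpow_right₀ hp1.le hcon
      rw [zpow_zero] at this
      rw [hval] at hy1
      linarith
    set k : ℕ := (-y.valuation).toNat with hkdef
    have hkz : (k : ℤ) = -y.valuation := Int.toNat_of_nonneg hvneg.le
    have hk1 : 1 ≤ k := by omega
    have hky : ‖y‖ = (p:ℝ) ^ (k:ℤ) := by rw [hval, hkz]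
    have hcnorm2 : ‖c‖ = (p:ℝ) ^ ((n:ℤ) + k) := by
      rw [hcnorm, hky, ← zpow_add₀ (ne_of_gt hp0R)]
    -- the pieces
    set s : ℕ → Set ℚ_[p] := fun j => B (a * (1 + (p:ℚ_[p])^n * j)) (n+k) with hs
    have hnormj : ∀ j : ℕ, ‖((j:ℕ) : ℚ_[p])‖ ≤ 1 := by
      intro j
      have := Padic.norm_int_le_one (p := p) (j:ℤ)
      push_cast at this
      exact this
    have hcent : ∀ j : ℕ, ‖a * (1 + (p:ℚ_[p])^n * (j:ℚ_[p]))‖ = 1 := by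
      intro j
      rw [norm_mul, ha, one_mul]
      have hw : ‖(p:ℚ_[p])^n * (j:ℚ_[p])‖ < 1 := by
        rw [norm_mul, Padic.norm_p_pow]
        calc (p:ℝ)^(-(n:ℤ)) * ‖((j:ℕ):ℚ_[p])‖ ≤ (p:ℝ)^(-(n:ℤ)) * 1 :=
              mul_le_mul_of_nonneg_left (hnormj j) (hrpos n).le
        _ = (p:ℝ)^(-(n:ℤ)) := mul_one _
        _ < 1 := hrlt1 n hn
      refine unit_norm_add norm_one ?_
      rw [show (1 + (p:ℚ_[p])^n * (j:ℚ_[p])) - 1 = (p:ℚ_[p])^n * (j:ℚ_[p]) by ring]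
      exact hw
    have hsubB : ∀ j : ℕ, s j ⊆ B a n := by
      intro j z hz
      have h1 : ‖a * (1 + (p:ℚ_[p])^n * (j:ℚ_[p])) - a‖ ≤ (p:ℝ)^(-(n:ℤ)) := by
        rw [show a * (1 + (p:ℚ_[p])^n * (j:ℚ_[p])) - a = a * ((p:ℚ_[p])^n * j) by ring,
          norm_mul, ha, one_mul, norm_mul, Padic.norm_p_pow]
        calc (p:ℝ)^(-(n:ℤ)) * ‖((j:ℕ):ℚ_[p])‖ ≤ (p:ℝ)^(-(n:ℤ)) * 1 :=
              mul_le_mul_of_nonneg_left (hnormj j) (hrpos n).le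
        _ = (p:ℝ)^(-(n:ℤ)) := mul_one _
      have h2 : ‖z - a * (1 + (p:ℚ_[p])^n * (j:ℚ_[p]))‖ ≤ (p:ℝ)^(-(n:ℤ)) := by
        refine le_trans hz (zpow_le_zpow_right₀ hp1.le ?_)
        push_cast
        omega
      have h3 := Padic.nonarchimedean (z - a*(1 + (p:ℚ_[p])^n * (j:ℚ_[p])))
        (a*(1 + (p:ℚ_[p])^n * (j:ℚ_[p])) - a)
      rw [show z - a*(1+(p:ℚ_[p])^n*(j:ℚ_[p])) + (a*(1+(p:ℚ_[p])^n*(j:ℚ_[p])) - a) = z - a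
        by ring] at h3
      exact le_trans h3 (max_le h2 h1)
    have hsplitexp : (p:ℝ)^(-((n+k:ℕ):ℤ)) = (p:ℝ)^(-(n:ℤ)) * (p:ℝ)^(-(k:ℤ)) := by
      rw [← zpow_add₀ (ne_of_gt hp0R)]
      congr 1
      push_cast
      ring
    have hdisj2 : (↑(Finset.range (p^k)) : Set ℕ).PairwiseDisjoint s := by
      intro j hj j' hj' hne
      simp only [Finset.coe_range, Set.mem_Iio] at hj hj'
      rw [Function.onFun, Set.disjoint_left]
      intro z hz hz'
      have hcc : ‖a * (1 + (p:ℚ_[p])^n * (j:ℚ_[p])) - a * (1 + (p:ℚ_[p])^n * (j':ℚ_[p]))‖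
          ≤ (p:ℝ)^(-((n+k:ℕ):ℤ)) := by
        have h3 := Padic.nonarchimedean (a*(1+(p:ℚ_[p])^n*(j:ℚ_[p])) - z)
          (z - a*(1+(p:ℚ_[p])^n*(j':ℚ_[p])))
        rw [show a*(1+(p:ℚ_[p])^n*(j:ℚ_[p])) - z + (z - a*(1+(p:ℚ_[p])^n*(j':ℚ_[p])))
            = a*(1+(p:ℚ_[p])^n*(j:ℚ_[p])) - a*(1+(p:ℚ_[p])^n*(j':ℚ_[p])) by ring] at h3
        refine h3.trans (max_le ?_ hz')
        rw [norm_sub_rev]; exact hz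
      rw [show a*(1+(p:ℚ_[p])^n*(j:ℚ_[p])) - a*(1+(p:ℚ_[p])^n*(j':ℚ_[p]))
          = a * (p:ℚ_[p])^n * ((j:ℚ_[p]) - (j':ℚ_[p])) by ring,
        norm_mul, norm_mul, ha, one_mul, Padic.norm_p_pow, hsplitexp] at hcc
      have hdd : ‖(Int.cast ((j:ℤ) - (j':ℤ)) : ℚ_[p])‖ ≤ (p:ℝ)^(-(k:ℤ)) := by
        push_cast
        exact le_of_mul_le_mul_left hcc (hrpos n)
      rw [Padic.norm_int_le_pow_iff_dvd] at hdd
      have hne' : (j:ℤ) - (j':ℤ) ≠ 0 := by intro h; apply hne; omega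
      have hle := Int.le_of_dvd (abs_pos.2 hne') ((dvd_abs _ _).2 hdd)
      have hb1 : (j:ℤ) < (p:ℤ)^k := by exact_mod_cast hj
      have hb2 : (j':ℤ) < (p:ℤ)^k := by exact_mod_cast hj'
      have habs : |(j:ℤ) - (j':ℤ)| < (p:ℤ)^k := by
        rw [abs_sub_lt_iff]
        constructor <;> omega
      linarith
    have hcover2 : B a n = ⋃ j ∈ Finset.range (p^k), s j := by
      apply Set.Subset.antisymm
      · intro z hz
        have hw1 : ‖(z - a) * a⁻¹ * ((p:ℚ_[p])^n)⁻¹‖ ≤ 1 := by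
          rw [norm_mul, norm_mul, norm_inv, norm_inv, ha, inv_one, mul_one,
            Padic.norm_p_pow, ← zpow_neg, neg_neg]
          calc ‖z - a‖ * (p:ℝ)^(n:ℤ) ≤ (p:ℝ)^(-(n:ℤ)) * (p:ℝ)^(n:ℤ) :=
                mul_le_mul_of_nonneg_right hz (zpow_pos hp0R _).le
          _ = 1 := by rw [← zpow_add₀ (ne_of_gt hp0R), neg_add_cancel, zpow_zero]
        set w : ℤ_[p] := ⟨(z - a) * a⁻¹ * ((p:ℚ_[p])^n)⁻¹, hw1⟩ with hwdef
        set j : ℕ := w.appr k with hjdef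
        have hjlt : j < p^k := w.appr_lt k
        have hnear : ‖(w:ℚ_[p]) - ((j:ℕ):ℚ_[p])‖ ≤ (p:ℝ)^(-(k:ℤ)) := by
          have h0 := ((w - (j:ℤ_[p])).norm_le_pow_iff_mem_span_pow k).2 (w.appr_spec k)
          have hco : ((w - (j:ℤ_[p]) : ℤ_[p]) : ℚ_[p]) = (w:ℚ_[p]) - ((j:ℕ):ℚ_[p]) := by
            push_cast
            ring
          rw [← hco, PadicInt.padic_norm_e_of_padicInt]
          exact h0
        refine Set.mem_biUnion (Finset.mem_range.2 hjlt) ?_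
        show ‖z - a * (1 + (p:ℚ_[p])^n * (j:ℚ_[p]))‖ ≤ (p:ℝ)^(-((n+k:ℕ):ℤ))
        have hzi : z - a * (1 + (p:ℚ_[p])^n * (j:ℚ_[p]))
            = a * (p:ℚ_[p])^n * ((w:ℚ_[p]) - ((j:ℕ):ℚ_[p])) := by
          have hwq : (w:ℚ_[p]) = (z - a) * a⁻¹ * ((p:ℚ_[p])^n)⁻¹ := rfl
          rw [hwq]
          field_simp
          ring
        rw [hzi, norm_mul, norm_mul, ha, one_mul, Padic.norm_p_pow, hsplitexp]
        exact mul_le_mul_of_nonneg_left hnear (hrpos n).le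
      · intro z hz
        rcases Set.mem_iUnion₂.1 hz with ⟨j, hj, hzj⟩
        exact hsubB j hzj
    -- the root of unity
    set ζ : ℂ := ψ (-(y * a)) with hζ
    have hζne : ζ ≠ 1 := by
      rw [hζ, Ne, hψ_ker, norm_neg, norm_mul, ha, mul_one]
      linarith
    have hζpow : ζ ^ (p^k) = 1 := by
      rw [hζ, ← psi_nat_mul ψ hψ_add hψ0]
      apply (hψ_ker _).2
      have hnval : ‖((p^k : ℕ) : ℚ_[p]) * -(y * a)‖ = 1 := by
        rw [norm_mul, norm_neg, norm_mul, ha, mul_one, hky]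
        have hppk : ‖((p^k : ℕ) : ℚ_[p])‖ = (p:ℝ)^(-(k:ℤ)) := by
          rw [show ((p^k : ℕ) : ℚ_[p]) = (p:ℚ_[p])^k by push_cast; ring, Padic.norm_p_pow]
        rw [hppk, ← zpow_add₀ (ne_of_gt hp0R), neg_add_cancel, zpow_zero]
      rw [hnval]
    -- the integrand is constant on each piece
    have hpiececonst : ∀ j : ℕ, ∀ z ∈ s j,
        Ψ (c * z) * ψ (c * (a - z)) = Ψ (c * a) * ζ ^ j := by
      intro j z hz
      rw [hΨconst z (hsubB j hz)]
      congr 1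
      have hsplit : c * (a - z)
          = (j:ℚ_[p]) * (-(y * a)) + c * (a * (1 + (p:ℚ_[p])^n * (j:ℚ_[p])) - z) := by
        rw [hc]
        field_simp
        ring
      rw [hsplit, hψ_add, psi_nat_mul ψ hψ_add hψ0, ← hζ]
      have hone : ψ (c * (a * (1 + (p:ℚ_[p])^n * (j:ℚ_[p])) - z)) = 1 := by
        apply (hψ_ker _).2
        rw [norm_mul, hcnorm2, norm_sub_rev]
        calc (p:ℝ)^((n:ℤ)+k) * ‖z - a*(1+(p:ℚ_[p])^n*(j:ℚ_[p]))‖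
            ≤ (p:ℝ)^((n:ℤ)+k) * (p:ℝ)^(-((n+k:ℕ):ℤ)) :=
              mul_le_mul_of_nonneg_left hz (zpow_pos hp0R _).le
        _ = (p:ℝ) ^ (((n:ℤ)+k) + -((n+k:ℕ):ℤ)) := (zpow_add₀ (ne_of_gt hp0R) _ _).symm
        _ = 1 := by
              rw [show ((n:ℤ)+k) + -((n+k:ℕ):ℤ) = 0 by push_cast; ring, zpow_zero]
      rw [hone, mul_one]
    -- assemble
    have hfinj : ∀ j : ℕ, ν (s j) < ⊤ := fun j =>
      lt_of_le_of_lt (measure_mono (hsubB j)) (hfin a n ha hn)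
    have hint : ∀ j ∈ Finset.range (p^k),
        IntegrableOn (fun z => Ψ (c*z) * ψ (c*(a-z))) (s j) ν := by
      intro j hj
      refine (integrableOn_congr_fun (fun z hz => hpiececonst j z hz) (hmeas _ _)).2 ?_
      exact integrableOn_const (hfinj j).ne
    rw [show {z : ℚ_[p] | ‖z - a‖ ≤ (p:ℝ)^(-(n:ℤ))} = B a n from rfl, hcover2]
    rw [integral_biUnion_finset (Finset.range (p^k)) (fun j _ => hmeas _ _) hdisj2 hint]
    have hterm : ∀ j ∈ Finset.range (p^k), ∫ z in s j, Ψ (c*z) * ψ (c*(a-z)) ∂ν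
        = (ν (B 1 (n+k))).toReal • (Ψ (c*a) * ζ^j) := by
      intro j hj
      rw [setIntegral_congr_fun (hmeas _ _) (fun z hz => hpiececonst j z hz), setIntegral_const, measureReal_def,
        hνtrans _ (hcent j) (n+k)]
    rw [Finset.sum_congr rfl hterm, if_neg (not_le.2 hy1)]
    have hsum : ∑ j ∈ Finset.range (p^k), (ν (B 1 (n+k))).toReal • (Ψ (c*a) * ζ^j)
        = (ν (B 1 (n+k))).toReal • (Ψ (c*a) * ∑ j ∈ Finset.range (p^k), ζ^j) := by
      rw [Finset.mul_sum, Finset.smul_sum]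
    rw [hsum, geom_sum_eq hζne, hζpow]
    simp
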